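/- Let G = (V,E) be a median graph and R an intermediate profile of linear orders on A indexed by V (i.e., every set V_{ab} = { i : a ≻_i b } is geodesically convex). If an edge e = uv is an ab-cut (meaning a ≻_u b and b ≻_v a), then V_{ab} = { w ∈ V : d(w,u) < d(w,v) } and V_{ba} = { w ∈ V : d(w,u) > d(w,v) }. -/

import Mathlib

open SimpleGraph

/-- `Geo G u w v` : vertex `w` lies geodesically between `u` and `v`
(i.e. on some shortest path from `u` to `v`). -/
def Geo {V : Type*} (G : SimpleGraph V) (u w v : V) : Prop :=
  G.dist u w + G.dist w v = G.dist u v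

/-- A set of vertices is geodesically convex if it contains every vertex
lying on a shortest path between two of its members. -/
def GConvex {V : Type*} (G : SimpleGraph V) (C : Set V) : Prop :=
  ∀ u ∈ C, ∀ v ∈ C, ∀ w, Geo G u w v → w ∈ C

/-- A profile of strict preference relations is intermediate on `G` if every
set `V_{ab}` of voters preferring `a` to `b` is geodesically convex. -/
def Intermediate {V A : Type*} (G : SimpleGraph V) (R : V → A → A → Prop) : Prop :=
  ∀ a b : A, GConvex G {i | R i a b}

/-- A median graph: connected, and every triple of vertices has a unique median. -/
def MedianGraph {V : Type*} (G : SimpleGraph V) : Prop :=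
  G.Connected ∧ ∀ u v w : V, ∃! m : V, Geo G u m v ∧ Geo G u m w ∧ Geo G v m w

/-- For an intermediate profile on a median graph, an `ab`-cut edge `uv`
determines `V_{ab}` and `V_{ba}` by distance comparison. -/
theorem stmt2 {V A : Type*} (G : SimpleGraph V) (hG : MedianGraph G)
    (R : V → A → A → Prop) (hR : ∀ i, IsStrictTotalOrder A (R i))
    (hint : Intermediate G R)
    (a b : A) (u v : V) (he : G.Adj u v) (hu : R u a b) (hv : R v b a) :
    {w | R w a b} = {w | G.dist w u < G.dist w v} ∧
    {w | R w b a} = {w | G.dist w u > G.dist w v} := by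
  obtain ⟨hconn, hmed⟩ := hG
  have huv1 : G.dist u v = 1 := dist_eq_one_iff_adj.mpr he
  -- every vertex is strictly closer to one endpoint
  have dc : ∀ x y : V, G.dist x y = G.dist y x := fun x y => SimpleGraph.dist_comm
  have key : ∀ w : V, G.dist w v = G.dist w u + 1 ∨ G.dist w u = G.dist w v + 1 := by
    intro w
    obtain ⟨m, ⟨h1, h2, h3⟩, -⟩ := hmed u v w
    unfold Geo at h1 h2 h3
    rw [huv1] at h1
    rcases Nat.add_eq_one_iff.mp h1 with ⟨hm0, -⟩ | ⟨-, hm0⟩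
    · have hmu : u = m := hconn.dist_eq_zero_iff.mp hm0
      rw [← hmu] at h3
      have e1 := dc w v; have e2 := dc w u; have e3 := dc v u
      omega
    · have hmv : m = v := hconn.dist_eq_zero_iff.mp hm0
      rw [hmv] at h2
      have e1 := dc w v; have e2 := dc w u
      omega
  have hasym : ∀ i x y, R i x y → ¬ R i y x := by
    intro i x y h1 h2
    exact (hR i).irrefl x ((hR i).trans _ _ _ h1 h2)
  have hne : a ≠ b := by rintro rfl; exact (hR u).irrefl a hu
  have htot : ∀ i, ¬ R i a b → R i b a := by
    intro i h
    by_contra h'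
    exact hne ((hR i).trichotomous a b h h')
  -- first set
  have main : ∀ w, R w a b ↔ G.dist w u < G.dist w v := by
    intro w
    constructor
    · intro hw
      rcases key w with h | h
      · omega
      · -- v is between w and u, so R v a b : contradiction
        exfalso
        have hgeo : Geo G w v u := by
          unfold Geo
          have e1 := dc v u
          omega
        exact hasym v b a hv (hint a b w hw u hu v hgeo)
    · intro hw
      rcases key w with h | h
      · by_contra hcon
        have hba := htot w hcon
        have hgeo : Geo G w u v := by unfold Geo; omega
        exact hasym u a b hu (hint b a w hba v hv u hgeo)
      · omega
  constructor
  · ext w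
    simp only [Set.mem_setOf_eq]
    exact main w
  · ext w
    simp only [Set.mem_setOf_eq, gt_iff_lt]
    constructor
    · intro hw
      rcases key w with h | h
      · exfalso
        exact hasym w b a hw ((main w).mpr (by omega))
      · omega
    · intro hw
      have : ¬ R w a b := fun h => by have := (main w).mp h; omega
      exact htot w this
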